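/- If g·d³/p₀² < 1, then there exists a unique λ > 0 such that (g + α·(2π/λ)⁴)·tanh(2πd/λ) = (p₀²/d²)·(2π/λ). -/

import Mathlib

open Real

section Aux

lemma tanh_hasDerivAt (x : ℝ) : HasDerivAt Real.tanh (1 / Real.cosh x ^ 2) x := by
  have h := (Real.hasDerivAt_sinh x).div (Real.hasDerivAt_cosh x) (Real.cosh_pos x).ne'
  rw [show (Real.sinh / Real.cosh : ℝ → ℝ) = Real.tanh from
    funext fun y => (Real.tanh_eq_sinh_div_cosh y).symm] at h
  refine h.congr_deriv ?_
  have hc := Real.cosh_sq_sub_sinh_sq x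
  field_simp
  nlinarith [hc]

lemma continuous_tanh' : Continuous Real.tanh := by
  have : Real.tanh = fun x => Real.sinh x / Real.cosh x :=
    funext fun x => Real.tanh_eq_sinh_div_cosh x
  rw [this]
  exact Real.continuous_sinh.div Real.continuous_cosh fun x => (Real.cosh_pos x).ne'

lemma sinh_lt_mul_cosh {x : ℝ} (hx : 0 < x) : Real.sinh x < x * Real.cosh x := by
  have key : StrictMonoOn (fun x : ℝ => x * Real.cosh x - Real.sinh x) (Set.Ici 0) := by
    refine strictMonoOn_of_deriv_pos (convex_Ici _)
      ((continuous_id.mul Real.continuous_cosh).sub Real.continuous_sinh).continuousOn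
      fun y hy => ?_
    rw [interior_Ici, Set.mem_Ioi] at hy
    have hD : HasDerivAt (fun x : ℝ => x * Real.cosh x - Real.sinh x) (y * Real.sinh y) y := by
      have := ((hasDerivAt_id y).mul (Real.hasDerivAt_cosh y)).sub (Real.hasDerivAt_sinh y)
      refine this.congr_deriv ?_
      simp only [id_eq]
      ring
    rw [hD.deriv]
    exact mul_pos hy (Real.sinh_pos_iff.2 hy)
  have := key (Set.self_mem_Ici) (Set.mem_Ici.2 hx.le) hx
  simpa using this

lemma lt_sinh_mul_cosh {x : ℝ} (hx : 0 < x) : x < Real.sinh x * Real.cosh x := by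
  have h := Real.self_lt_sinh_iff.2 (by linarith : (0:ℝ) < 2 * x)
  rw [Real.sinh_two_mul] at h
  linarith

lemma key_ineq {x : ℝ} (hx : 0 ≤ x) :
    4 * (Real.sinh x * Real.cosh x) ≤ 3 * x * Real.cosh x ^ 2 + x := by
  rcases eq_or_lt_of_le hx with rfl | hx
  · simp
  have key : StrictMonoOn
      (fun x : ℝ => 3 * x * Real.cosh x ^ 2 + x - 4 * (Real.sinh x * Real.cosh x))
      (Set.Ici 0) := by
    refine strictMonoOn_of_deriv_pos (convex_Ici _) ?_ fun y hy => ?_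
    · exact (((continuous_const.mul continuous_id).mul (Real.continuous_cosh.pow 2)).add
        continuous_id |>.sub
        (continuous_const.mul (Real.continuous_sinh.mul Real.continuous_cosh))).continuousOn
    · rw [interior_Ici, Set.mem_Ioi] at hy
      have hD : HasDerivAt
          (fun x : ℝ => 3 * x * Real.cosh x ^ 2 + x - 4 * (Real.sinh x * Real.cosh x))
          (3 * Real.cosh y ^ 2 + 3 * y * (2 * Real.cosh y * Real.sinh y) + 1
            - 4 * (Real.cosh y * Real.cosh y + Real.sinh y * Real.sinh y)) y := by
        have h1 : HasDerivAt (fun x : ℝ => 3 * x) 3 y := by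
          simpa using (hasDerivAt_id y).const_mul (3:ℝ)
        have h2 : HasDerivAt (fun x : ℝ => Real.cosh x ^ 2)
            (2 * Real.cosh y ^ (2-1) * Real.sinh y) y := (Real.hasDerivAt_cosh y).pow 2
        have h3 := (h1.mul h2).add (hasDerivAt_id y)
        have h4 := ((Real.hasDerivAt_sinh y).mul (Real.hasDerivAt_cosh y)).const_mul (4:ℝ)
        have := h3.sub h4
        refine this.congr_deriv ?_
        norm_num
      rw [hD.deriv]
      have hc := Real.cosh_sq y
      have hs : 0 < Real.sinh y := Real.sinh_pos_iff.2 hy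
      have h2 := sinh_lt_mul_cosh hy
      nlinarith [Real.cosh_pos y]
  have := key (Set.self_mem_Ici) (Set.mem_Ici.2 hx.le) hx
  simp only [Real.cosh_zero, Real.sinh_zero] at this
  nlinarith [this]

lemma tanh_lt_self {x : ℝ} (hx : 0 < x) : Real.tanh x < x := by
  rw [Real.tanh_eq_sinh_div_cosh, div_lt_iff₀ (Real.cosh_pos x)]
  exact sinh_lt_mul_cosh hx

lemma mul_inv_cosh_sq_lt_tanh {x : ℝ} (hx : 0 < x) :
    x * (1 / Real.cosh x ^ 2) < Real.tanh x := by
  have hc := Real.cosh_pos x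
  rw [Real.tanh_eq_sinh_div_cosh, mul_one_div, div_lt_div_iff₀ (by positivity) hc]
  nlinarith [lt_sinh_mul_cosh hx]

lemma tanh_bound {x : ℝ} (hx : 0 < x) :
    4 * Real.tanh x ≤ 3 * x + x * (1 / Real.cosh x ^ 2) := by
  have h := key_ineq hx.le
  have hc := Real.cosh_pos x
  have hc2 : (0:ℝ) < Real.cosh x ^ 2 := by positivity
  rw [Real.tanh_eq_sinh_div_cosh, ← sub_nonneg]
  have heq : 3 * x + x * (1 / Real.cosh x ^ 2) - 4 * (Real.sinh x / Real.cosh x)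
      = (3 * x * Real.cosh x ^ 2 + x - 4 * (Real.sinh x * Real.cosh x)) / Real.cosh x ^ 2 := by
    field_simp
  rw [heq]
  exact div_nonneg (by linarith) hc2.le

lemma half_le_tanh {x : ℝ} (hx : 1 ≤ x) : (1:ℝ)/2 ≤ Real.tanh x := by
  have h3 : (3:ℝ) < Real.exp 2 := by
    have := Real.add_one_lt_exp (by norm_num : (2:ℝ) ≠ 0)
    linarith
  have hmono : Real.exp 2 ≤ Real.exp (2 * x) := Real.exp_le_exp.2 (by linarith)
  have hkey : 3 * Real.exp (-x) ≤ Real.exp x := by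
    have hx0 : 0 < Real.exp (-x) := Real.exp_pos _
    have : Real.exp x = Real.exp (2*x) * Real.exp (-x) := by
      rw [← Real.exp_add]; ring_nf
    rw [this]
    nlinarith
  rw [Real.tanh_eq_sinh_div_cosh, le_div_iff₀ (Real.cosh_pos x), Real.sinh_eq, Real.cosh_eq]
  linarith

lemma aux_unique (g B C : ℝ) (hg : 0 < g) (hB : 0 < B) (hC : g < C) :
    ∃! u : ℝ, 0 < u ∧ (g + B * u ^ 4) * Real.tanh u = C * u := by
  set f : ℝ → ℝ := fun u => (g + B * u ^ 4) * Real.tanh u / u with hfdef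
  have hcont : ∀ {x : ℝ}, x ≠ 0 → ContinuousAt f x := by
    intro x hx
    exact ((continuous_const.add (continuous_const.mul (continuous_pow 4))).mul
      continuous_tanh').continuousAt.div continuousAt_id hx
  have hcontOn : ∀ {a b : ℝ}, 0 < a → ContinuousOn f (Set.Icc a b) := by
    intro a b ha x hx
    exact (hcont (lt_of_lt_of_le ha hx.1).ne').continuousWithinAt
  have hderiv : ∀ {x : ℝ}, 0 < x → HasDerivAt f
      (((4 * B * x ^ 3 * Real.tanh x + (g + B * x ^ 4) * (1 / Real.cosh x ^ 2)) * x
        - (g + B * x ^ 4) * Real.tanh x) / x ^ 2) x := by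
    intro x hx
    have h1 : HasDerivAt (fun y : ℝ => g + B * y ^ 4) (B * (4 * x ^ 3)) x := by
      have h0 := ((hasDerivAt_pow 4 x).const_mul B).const_add g
      have he : B * ((4:ℕ) * x ^ (4 - 1)) = B * (4 * x ^ 3) := by push_cast; ring
      rw [he] at h0
      exact h0
    have h3 := (h1.mul (tanh_hasDerivAt x)).div (hasDerivAt_id x) hx.ne'
    refine h3.congr_deriv ?_
    simp only [id_eq, Pi.mul_apply]
    ring
  have hdpos : ∀ {x : ℝ}, 0 < x → g < f x → 0 < deriv f x := by
    intro x hx hgt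
    have hgt' : g * x < (g + B * x ^ 4) * Real.tanh x := by
      have := (lt_div_iff₀ hx).1 hgt
      linarith
    rw [(hderiv hx).deriv]
    apply div_pos _ (by positivity)
    have h2 := tanh_lt_self hx
    have h3 := mul_inv_cosh_sq_lt_tanh hx
    have h4 := tanh_bound hx
    have hsx : 0 < x * (1 / Real.cosh x ^ 2) := by positivity
    have ht : 0 < Real.tanh x := lt_trans hsx h3
    have hP : 0 < B * x ^ 4 := by positivity
    nlinarith [mul_nonneg hg.le (sub_nonneg.2 h4), mul_pos hP hsx, mul_pos hP ht]
  have hmono : ∀ {a b : ℝ}, 0 < a → (∀ x ∈ Set.Ioo a b, g < f x) →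
      StrictMonoOn f (Set.Icc a b) := by
    intro a b ha hIoo
    refine strictMonoOn_of_deriv_pos (convex_Icc a b) (hcontOn ha) fun x hx => ?_
    rw [interior_Icc] at hx
    exact hdpos (lt_trans ha hx.1) (hIoo x hx)
  -- uniqueness core
  have hcore : ∀ a b : ℝ, 0 < a → a < b → f a = C → f b = C → False := by
    intro a b ha hab hfa hfb
    have hfagt : g < f a := by rw [hfa]; exact hC
    have hstep : ∀ x ∈ Set.Icc a b, g < f x := by
      by_contra hcon
      push_neg at hcon
      obtain ⟨x₀, hx₀, hx₀le⟩ := hcon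
      set T := Set.Icc a b ∩ f ⁻¹' Set.Iic g with hT
      have hTne : T.Nonempty := ⟨x₀, hx₀, hx₀le⟩
      have hTclosed : IsClosed T :=
        (hcontOn ha).preimage_isClosed_of_isClosed isClosed_Icc isClosed_Iic
      have hTbdd : BddBelow T := ⟨a, fun y hy => hy.1.1⟩
      set m := sInf T with hm
      have hmT : m ∈ T := hTclosed.csInf_mem hTne hTbdd
      have ham : a < m := by
        refine lt_of_le_of_ne hmT.1.1 fun h => ?_
        have : f a ≤ g := by rw [h]; exact hmT.2
        linarith
      have hIco : ∀ x ∈ Set.Ioo a m, g < f x := by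
        intro x hx
        by_contra hle
        push_neg at hle
        have hxT : x ∈ T := ⟨⟨hx.1.le, le_trans hx.2.le hmT.1.2⟩, hle⟩
        exact absurd (csInf_le hTbdd hxT) (not_le.2 hx.2)
      have hmono' : StrictMonoOn f (Set.Icc a m) := hmono ha hIco
      have : f a < f m := hmono' ⟨le_refl a, ham.le⟩ ⟨ham.le, le_refl m⟩ ham
      have : f m ≤ g := hmT.2
      linarith
    have hmono'' : StrictMonoOn f (Set.Icc a b) :=
      hmono ha fun x hx => hstep x ⟨hx.1.le, hx.2.le⟩
    have : f a < f b := hmono'' ⟨le_refl a, hab.le⟩ ⟨hab.le, le_refl b⟩ hab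
    rw [hfa, hfb] at this
    exact lt_irrefl C this
  -- existence
  have hCg : 0 < C - g := sub_pos.2 hC
  set u₁ : ℝ := min 1 ((C - g) / (2 * B)) with hu₁def
  have hu₁pos : 0 < u₁ := lt_min one_pos (by positivity)
  have hu₁le1 : u₁ ≤ 1 := min_le_left _ _
  have hu₁le2 : u₁ ≤ (C - g) / (2 * B) := min_le_right _ _
  have hBu₁ : B * u₁ ≤ (C - g) / 2 := by
    calc B * u₁ ≤ B * ((C - g) / (2 * B)) := mul_le_mul_of_nonneg_left hu₁le2 hB.le
    _ = (C - g) / 2 := by field_simp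
  have hu₁4 : u₁ ^ 4 ≤ u₁ := by
    have := pow_le_pow_of_le_one hu₁pos.le hu₁le1 (by norm_num : 1 ≤ 4)
    simpa using this
  have hfu₁ : f u₁ < C := by
    rw [hfdef]
    simp only
    rw [div_lt_iff₀ hu₁pos]
    have ht := tanh_lt_self hu₁pos
    have htp : 0 < Real.tanh u₁ := lt_trans (by positivity) (mul_inv_cosh_sq_lt_tanh hu₁pos)
    have h6 : B * u₁ ^ 4 ≤ (C - g) / 2 := le_trans (by nlinarith) hBu₁
    nlinarith [mul_lt_mul_of_pos_left ht (by positivity : (0:ℝ) < g + B * u₁ ^ 4)]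
  set u₂ : ℝ := max u₁ (max 1 (2 * C / B)) with hu₂def
  have hu₂1 : (1:ℝ) ≤ u₂ := le_trans (le_max_left _ _) (le_max_right _ _)
  have hu₂pos : 0 < u₂ := lt_of_lt_of_le one_pos hu₂1
  have hu₁u₂ : u₁ ≤ u₂ := le_max_left _ _
  have hu₂C : 2 * C / B ≤ u₂ := le_trans (le_max_right _ _) (le_max_right _ _)
  have hBu₂ : 2 * C ≤ B * u₂ := by
    rw [div_le_iff₀ hB] at hu₂C
    linarith
  have hfu₂ : C ≤ f u₂ := by
    rw [hfdef]
    simp only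
    rw [le_div_iff₀ hu₂pos]
    have hhalf := half_le_tanh hu₂1
    have hC0 : 0 < C := lt_trans hg hC
    have h7 : u₂ ≤ u₂ ^ 3 := by
      nlinarith [mul_le_mul_of_nonneg_left hu₂1 hu₂pos.le,
        mul_nonneg (mul_self_nonneg (u₂ - 1)) hu₂pos.le]
    have h8 : 2 * C * u₂ ≤ B * u₂ ^ 4 := by
      calc 2 * C * u₂ ≤ 2 * C * u₂ ^ 3 := by nlinarith
      _ ≤ (B * u₂) * u₂ ^ 3 := by nlinarith [pow_pos hu₂pos 3]
      _ = B * u₂ ^ 4 := by ring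
    nlinarith [mul_le_mul_of_nonneg_left hhalf (by positivity : (0:ℝ) ≤ B * u₂ ^ 4),
      mul_pos hg (lt_of_lt_of_le (by norm_num : (0:ℝ) < 1/2) hhalf)]
  obtain ⟨u₀, hu₀mem, hfu₀⟩ := intermediate_value_Icc hu₁u₂ (hcontOn hu₁pos) ⟨hfu₁.le, hfu₂⟩
  have hu₀pos : 0 < u₀ := lt_of_lt_of_le hu₁pos hu₀mem.1
  refine ⟨u₀, ⟨hu₀pos, ?_⟩, ?_⟩
  · have := hfu₀
    rw [hfdef] at this
    simp only at this
    rw [div_eq_iff hu₀pos.ne'] at this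
    exact this
  · rintro v ⟨hv, hveq⟩
    have hfv : f v = C := by
      rw [hfdef]
      simp only
      rw [div_eq_iff hv.ne']
      exact hveq
    by_contra hne
    rcases lt_or_gt_of_ne hne with h | h
    · exact hcore v u₀ hv h hfv hfu₀
    · exact hcore u₀ v hu₀pos h hfu₀ hfv

end Aux

/-- Dispersion relation for irrotational hydroelastic waves: if g·d³/p₀² < 1
then there is a unique wavelength λ > 0 with
(g + α(2π/λ)⁴)·tanh(2πd/λ) = (p₀²/d²)·(2π/λ). -/
theorem dispersion_relation_unique_wavelength
    (g α d p₀ : ℝ) (hg : 0 < g) (hα : 0 < α) (hd : 0 < d) (hp₀ : p₀ < 0)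
    (hcond : g * d ^ 3 / p₀ ^ 2 < 1) :
    ∃! lam : ℝ, 0 < lam ∧
      (g + α * (2 * π / lam) ^ 4) * Real.tanh (2 * π * d / lam)
        = (p₀ ^ 2 / d ^ 2) * (2 * π / lam) := by
  have hπ : 0 < π := Real.pi_pos
  have hp2 : 0 < p₀ ^ 2 := by nlinarith
  have hd3 : 0 < d ^ 3 := by positivity
  have hgd : g * d ^ 3 < p₀ ^ 2 := by
    rw [div_lt_one hp2] at hcond
    exact hcond
  have hC : g < p₀ ^ 2 / d ^ 3 := by
    rw [lt_div_iff₀ hd3]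
    linarith
  obtain ⟨u₀, ⟨hu₀, hequ⟩, huniq⟩ :=
    aux_unique g (α / d ^ 4) (p₀ ^ 2 / d ^ 3) hg (by positivity) hC
  refine ⟨2 * π * d / u₀, ⟨by positivity, ?_⟩, ?_⟩
  · have h1 : 2 * π * d / (2 * π * d / u₀) = u₀ := by
      field_simp
    have h2 : 2 * π / (2 * π * d / u₀) = u₀ / d := by
      rw [div_div_eq_mul_div, eq_div_iff hd.ne']
      field_simp
    rw [h1, h2]
    have h3 : α * (u₀ / d) ^ 4 = α / d ^ 4 * u₀ ^ 4 := by
      field_simp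
    have h4 : p₀ ^ 2 / d ^ 2 * (u₀ / d) = p₀ ^ 2 / d ^ 3 * u₀ := by
      field_simp
    rw [h3, h4]
    exact hequ
  · rintro lam ⟨hlam, heq⟩
    have hv : 0 < 2 * π * d / lam := by positivity
    have h2 : 2 * π / lam = (2 * π * d / lam) / d := by
      field_simp
    have h3 : α * (2 * π / lam) ^ 4 = α / d ^ 4 * (2 * π * d / lam) ^ 4 := by
      rw [h2]
      field_simp
    have h4 : p₀ ^ 2 / d ^ 2 * (2 * π / lam) = p₀ ^ 2 / d ^ 3 * (2 * π * d / lam) := by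
      rw [h2]
      field_simp
    rw [h3, h4] at heq
    have hveq := huniq (2 * π * d / lam) ⟨hv, heq⟩
    have : lam = 2 * π * d / u₀ := by
      rw [← hveq]
      field_simp
    exact this
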